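/- Suppose the positive sequence (α_k) satisfies α_k/α_n ≤ λ^{n−k} k!/n! for all 0 ≤ k ≤ n, where λ > 0. Let t_{n,n−2k} = (−1)^k 2^{n−2k−1} n (n−k−1)!/(k!(n−2k)!) be the nonzero Chebyshev coefficients. Then for every n ≥ 1, (1/4)·4^n·α_n ≤ ∑_{k=0}^{⌊n/2⌋} α_{n−2k} t_{n,n−2k}^2 ≤ (1/2)·e^{λ²/16}·4^n·α_n. -/

import Mathlib

open Nat

/-- The nonzero coefficients of the degree-`n` Chebyshev polynomial of the first kind:
`t_{n,n−2k} = (−1)^k 2^{n−2k−1} n (n−k−1)!/(k!(n−2k)!)`. -/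
noncomputable def chebCoeff (n k : ℕ) : ℝ :=
  (-1 : ℝ) ^ k * (2 : ℝ) ^ ((n : ℤ) - 2 * k - 1) * (n : ℝ) * ((n - k - 1)! : ℝ)
    / ((k ! : ℝ) * ((n - 2 * k)! : ℝ))

/-- Key combinatorial inequality: with `n = 2k + m`,
`n² ((n-k-1)!)² ≤ 2 n! (n-2k)!`. -/
lemma cheb_key_nat : ∀ k m : ℕ, 1 ≤ 2*k + m →
    (2*k+m)^2 * ((k+m-1)!)^2 ≤ 2 * (2*k+m)! * m ! := by
  intro k
  induction k with
  | zero =>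
    intro m hm
    obtain ⟨m', rfl⟩ : ∃ m', m = m' + 1 := ⟨m - 1, by omega⟩
    have e1 : 2*0 + (m'+1) = m'+1 := by omega
    rw [e1, Nat.succ_sub_one, Nat.factorial_succ]
    nlinarith [Nat.factorial_pos m', sq_nonneg ((m'+1) * m' !)]
  | succ k ih =>
    intro m hm
    rcases Nat.eq_zero_or_pos k with rfl | hk
    · have e0 : 2*(0+1)+m = m+2 := by omega
      have e2 : 0+1+m-1 = m := by omega
      rw [e0, e2, Nat.factorial_succ, Nat.factorial_succ]
      calc (m+2)^2 * (m !)^2 ≤ (2*((m+2)*(m+1))) * (m !)^2 := by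
            apply Nat.mul_le_mul_right
            nlinarith
        _ = 2 * ((m+2) * ((m+1) * m !)) * m ! := by ring
    · have hih := ih (m+2) (by omega)
      have e1 : 2*k + (m+2) = 2*(k+1) + m := by omega
      have e2 : k + (m+2) - 1 = (k+1) + m - 1 + 1 := by omega
      rw [e1, e2, Nat.factorial_succ, Nat.factorial_succ, Nat.factorial_succ] at hih
      set c := (k+1) + m - 1 with hc
      set n := 2*(k+1)+m with hn
      have hcm : (m+2)*(m+1) ≤ (c+1)^2 := by
        have : c = k + m := by omega
        nlinarith [this, hk]
      have hmain : (c+1)^2 * (n^2 * (c !)^2) ≤ (c+1)^2 * (2 * n ! * m !) := by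
        calc (c+1)^2 * (n^2 * (c !)^2) = n^2 * ((c+1) * c !)^2 := by ring
          _ ≤ 2 * n ! * ((m+2) * ((m+1) * m !)) := hih
          _ = ((m+2)*(m+1)) * (2 * n ! * m !) := by ring
          _ ≤ (c+1)^2 * (2 * n ! * m !) := Nat.mul_le_mul_right _ hcm
      exact Nat.le_of_mul_le_mul_left hmain (by positivity)

lemma cheb_sq (n k : ℕ) :
    chebCoeff n k ^ 2 = ((2:ℝ) ^ ((n : ℤ) - 2*k - 1))^2 * ((n:ℝ) * ((n - k - 1)! : ℝ))^2
      / ((k ! : ℝ) * ((n - 2*k)! : ℝ))^2 := by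
  unfold chebCoeff
  rw [div_pow]
  congr 1
  have h1 : ((-1:ℝ)^k)^2 = 1 := by rw [← pow_mul, mul_comm, pow_mul]; norm_num
  calc ((-1:ℝ) ^ k * (2:ℝ) ^ ((n : ℤ) - 2 * k - 1) * (n:ℝ) * ((n - k - 1)! : ℝ))^2
      = ((-1:ℝ)^k)^2 * (((2:ℝ) ^ ((n : ℤ) - 2*k - 1))^2 * ((n:ℝ) * ((n - k - 1)! : ℝ))^2) := by ring
    _ = _ := by rw [h1, one_mul]

lemma two_zpow_sq (n k : ℕ) :
    ((2:ℝ) ^ ((n : ℤ) - 2*k - 1))^2 = (4:ℝ)^n / (4 * 16^k) := by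
  have h2 : (2:ℝ) ≠ 0 := two_ne_zero
  rw [sq, ← zpow_add₀ h2]
  have e : ((n : ℤ) - 2*k - 1) + ((n : ℤ) - 2*k - 1) = 2*(n:ℤ) - (4*k + 2) := by ring
  rw [e, zpow_sub₀ h2]
  have e1 : (2:ℝ) ^ (2*(n:ℤ)) = 4^n := by
    rw [show (2*(n:ℤ)) = ((2*n : ℕ) : ℤ) by push_cast; ring, zpow_natCast, pow_mul]; norm_num
  have e2 : (2:ℝ) ^ (4*(k:ℤ) + 2) = 4 * 16^k := by
    rw [show (4*(k:ℤ)+2) = ((4*k+2 : ℕ) : ℤ) by push_cast; ring, zpow_natCast, pow_add, pow_mul]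
    norm_num; ring
  rw [e1, e2]

lemma cheb_term_bound (α : ℕ → ℝ) (l : ℝ) (hl : 0 < l) (hα : ∀ k, 0 < α k)
    (h : ∀ n k : ℕ, k ≤ n → α k / α n ≤ l ^ (n - k) * (k ! : ℝ) / (n ! : ℝ))
    (n k : ℕ) (hn : 1 ≤ n) (hk : 2*k ≤ n) :
    α (n - 2*k) * chebCoeff n k ^ 2 ≤ 2 * (l^2/16)^k / (k ! : ℝ) * ((4:ℝ)^n/4 * α n) := by
  set m := n - 2*k with hmdef
  have hfm : (0:ℝ) < (m ! : ℝ) := by exact_mod_cast Nat.factorial_pos m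
  have hfn : (0:ℝ) < (n ! : ℝ) := by exact_mod_cast Nat.factorial_pos n
  have hfk : (0:ℝ) < (k ! : ℝ) := by exact_mod_cast Nat.factorial_pos k
  have hfk1 : (1:ℝ) ≤ (k ! : ℝ) := by
    exact_mod_cast Nat.one_le_iff_ne_zero.mpr (Nat.factorial_ne_zero k)
  have hα1 : α m ≤ α n * (l^(2*k) * (m ! : ℝ) / (n ! : ℝ)) := by
    have h0 := h n m (by omega)
    rw [div_le_iff₀ (hα n)] at h0
    have e : n - m = 2*k := by omega
    rw [e] at h0
    calc α m ≤ l ^ (2*k) * (m ! : ℝ) / (n ! : ℝ) * α n := h0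
      _ = α n * (l^(2*k) * (m ! : ℝ) / (n ! : ℝ)) := by ring
  have hC : (0:ℝ) ≤ chebCoeff n k ^ 2 := sq_nonneg _
  calc α m * chebCoeff n k ^ 2
      ≤ (α n * (l^(2*k) * (m ! : ℝ) / (n ! : ℝ))) * chebCoeff n k ^ 2 :=
        mul_le_mul_of_nonneg_right hα1 hC
    _ ≤ 2 * (l^2/16)^k / (k ! : ℝ) * ((4:ℝ)^n/4 * α n) := by
        rw [cheb_sq, two_zpow_sq n k]
        have key' : (n:ℝ)^2 * ((n - k - 1)! : ℝ)^2 * (k ! : ℝ)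
            ≤ 2 * (n ! : ℝ) * (m ! : ℝ) * (k ! : ℝ)^2 := by
          have hkey := cheb_key_nat k m (by omega)
          have e1 : 2*k + m = n := by omega
          have e2 : k + m - 1 = n - k - 1 := by omega
          rw [e1, e2] at hkey
          have hkey' : ((n:ℝ)^2 * ((n - k - 1)! : ℝ)^2) ≤ 2 * (n ! : ℝ) * (m ! : ℝ) := by
            exact_mod_cast hkey
          have s1 : (n:ℝ)^2 * ((n - k - 1)! : ℝ)^2 * (k ! : ℝ)
              ≤ (2 * (n ! : ℝ) * (m ! : ℝ)) * (k ! : ℝ) :=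
            mul_le_mul_of_nonneg_right hkey' hfk.le
          have s2 : (2 * (n ! : ℝ) * (m ! : ℝ)) * (k ! : ℝ)
              ≤ (2 * (n ! : ℝ) * (m ! : ℝ)) * (k ! : ℝ)^2 := by
            have h3 : (k ! : ℝ) ≤ (k ! : ℝ)^2 := by nlinarith
            exact mul_le_mul_of_nonneg_left h3 (by positivity)
          linarith
        have hc : (0:ℝ) < α n * (4:ℝ)^n * (l^2)^k / (4 * 16^k) :=
          div_pos (mul_pos (mul_pos (hα n) (by positivity)) (by positivity)) (by positivity)
        have lhs_eq : α n * (l^(2*k) * (m ! : ℝ) / (n ! : ℝ)) *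
            ((4:ℝ)^n / (4 * 16^k) * ((n:ℝ) * ((n - k - 1)! : ℝ))^2 / ((k ! : ℝ) * (m ! : ℝ))^2)
            = (α n * (4:ℝ)^n * (l^2)^k / (4 * 16^k)) *
              ((n:ℝ)^2 * ((n - k - 1)! : ℝ)^2 / ((n ! : ℝ) * (k ! : ℝ)^2 * (m ! : ℝ))) := by
          rw [← pow_mul]
          field_simp
        have rhs_eq : 2 * (l^2/16)^k / (k ! : ℝ) * ((4:ℝ)^n/4 * α n)
            = (α n * (4:ℝ)^n * (l^2)^k / (4 * 16^k)) * (2 / (k ! : ℝ)) := by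
          rw [div_pow]
          field_simp
        rw [lhs_eq, rhs_eq]
        apply mul_le_mul_of_nonneg_left _ hc.le
        rw [div_le_div_iff₀ (by positivity) hfk]
        calc (n:ℝ)^2 * ((n - k - 1)! : ℝ)^2 * (k ! : ℝ)
            ≤ 2 * (n ! : ℝ) * (m ! : ℝ) * (k ! : ℝ)^2 := key'
          _ = 2 * ((n ! : ℝ) * (k ! : ℝ)^2 * (m ! : ℝ)) := by ring

theorem chebyshev_coeff_sum_bounds (α : ℕ → ℝ) (l : ℝ) (hl : 0 < l) (hα : ∀ k, 0 < α k)
    (h : ∀ n k : ℕ, k ≤ n → α k / α n ≤ l ^ (n - k) * (k ! : ℝ) / (n ! : ℝ))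
    (n : ℕ) (hn : 1 ≤ n) :
    (1 / 4 : ℝ) * 4 ^ n * α n ≤ ∑ k ∈ Finset.range (n / 2 + 1), α (n - 2 * k) * chebCoeff n k ^ 2
      ∧ ∑ k ∈ Finset.range (n / 2 + 1), α (n - 2 * k) * chebCoeff n k ^ 2
        ≤ (1 / 2 : ℝ) * Real.exp (l ^ 2 / 16) * 4 ^ n * α n := by
  have hc0 : chebCoeff n 0 ^ 2 = (4:ℝ)^n / 4 := by
    rw [cheb_sq, two_zpow_sq n 0]
    have e1 : (n:ℝ) * ((n - 0 - 1)! : ℝ) = (n ! : ℝ) := by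
      have := Nat.mul_factorial_pred (show n ≠ 0 by omega)
      have e : n - 0 - 1 = n - 1 := by omega
      rw [e]
      exact_mod_cast this
    have e2 : n - 2*0 = n := by omega
    rw [e1, e2]
    have hfn : (0:ℝ) < (n ! : ℝ) := by exact_mod_cast Nat.factorial_pos n
    field_simp
    ring
  constructor
  · have h0 : α (n - 2 * 0) * chebCoeff n 0 ^ 2 = (1 / 4 : ℝ) * 4 ^ n * α n := by
      rw [hc0]
      have e2 : n - 2*0 = n := by omega
      rw [e2]; ring
    rw [← h0]
    apply Finset.single_le_sum (f := fun k => α (n - 2 * k) * chebCoeff n k ^ 2)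
    · intro i _
      exact mul_nonneg (hα _).le (sq_nonneg _)
    · exact Finset.mem_range.mpr (by omega)
  · have hstep : ∀ k ∈ Finset.range (n / 2 + 1),
        α (n - 2 * k) * chebCoeff n k ^ 2 ≤ 2 * (l^2/16)^k / (k ! : ℝ) * ((4:ℝ)^n/4 * α n) := by
      intro k hk
      exact cheb_term_bound α l hl hα h n k hn (by
        have := Finset.mem_range.mp hk; omega)
    have hnn : (0:ℝ) ≤ 2 * ((4:ℝ)^n/4 * α n) :=
      mul_nonneg (by norm_num) (mul_nonneg (by positivity) (hα n).le)
    calc ∑ k ∈ Finset.range (n / 2 + 1), α (n - 2 * k) * chebCoeff n k ^ 2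
        ≤ ∑ k ∈ Finset.range (n / 2 + 1), 2 * (l^2/16)^k / (k ! : ℝ) * ((4:ℝ)^n/4 * α n) :=
          Finset.sum_le_sum hstep
      _ = (2 * ((4:ℝ)^n/4 * α n)) * ∑ k ∈ Finset.range (n / 2 + 1), (l^2/16)^k / (k ! : ℝ) := by
          rw [Finset.mul_sum]
          apply Finset.sum_congr rfl
          intro k _
          ring
      _ ≤ (2 * ((4:ℝ)^n/4 * α n)) * Real.exp (l^2/16) :=
          mul_le_mul_of_nonneg_left (Real.sum_le_exp_of_nonneg (by positivity) _) hnn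
      _ = (1 / 2 : ℝ) * Real.exp (l ^ 2 / 16) * 4 ^ n * α n := by ring
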